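/- Let z be a point of the upper half-plane lying in the open ideal triangle with vertices 0, 1, ∞, i.e. 0 < Re z < 1 and |z - 1/2| > 1/2. If g ∈ Γ₀(2) is such that g·z also lies in this open region, then g = ±I (and consequently g·z = z). (This is the uniqueness half of the paper's assertion that the ideal triangle {1/0, 0/1, 1/1} is a fundamental domain for the action of G on ℍ².) -/

import Mathlib

open UpperHalfPlane

/-- Key inequality: if `x < x² + y²`, `0 < x < 1`, `c` even nonzero, `d` odd, then
`|cz+d|² > 1`. -/
lemma key_ineq (x y : ℝ) (c d : ℤ) (hx1 : 0 < x) (hx2 : x < 1)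
    (hS : x < x ^ 2 + y ^ 2) (hc : Even c) (hc0 : c ≠ 0) (hd : Odd d) :
    1 < ((c : ℝ) * x + d) ^ 2 + ((c : ℝ) * y) ^ 2 := by
  have hd0 : d ≠ 0 := by rintro rfl; exact (Int.not_odd_iff_even.mpr Even.zero) hd
  have hcd0 : c + d ≠ 0 := by
    intro h
    have : Odd (c + d) := hc.add_odd hd
    rw [h] at this
    exact (Int.not_odd_iff_even.mpr Even.zero) this
  have hd1 : (1 : ℝ) ≤ (d : ℝ) ^ 2 := by
    have : (1 : ℤ) ≤ d ^ 2 := by rcases lt_or_gt_of_ne hd0 with h | h <;> nlinarith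
    exact_mod_cast this
  have hcd1 : (1 : ℝ) ≤ ((c : ℝ) + d) ^ 2 := by
    have : (1 : ℤ) ≤ (c + d) ^ 2 := by rcases lt_or_gt_of_ne hcd0 with h | h <;> nlinarith
    have h' : (1 : ℝ) ≤ (((c + d) ^ 2 : ℤ) : ℝ) := by exact_mod_cast this
    push_cast at h'
    linarith
  have hc2 : (0 : ℝ) < (c : ℝ) ^ 2 := by positivity
  have hmain : (0 : ℝ) < (c : ℝ) ^ 2 * (x ^ 2 + y ^ 2 - x) := by nlinarith
  rcases le_or_gt 0 ((c : ℝ) * d) with h1 | h1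
  · nlinarith [mul_nonneg h1 hx1.le, mul_pos hc2 hx1]
  · rcases le_or_gt 0 ((c : ℝ) * ((c : ℝ) + 2 * d)) with h2 | h2
    · nlinarith [mul_nonneg h2 hx1.le]
    · nlinarith [mul_pos (neg_pos.mpr h2) (sub_pos.mpr hx2)]

/-- From the region hypothesis `|z - 1/2| > 1/2` we get `Re z < |z|²`. -/
lemma region_ineq (z : UpperHalfPlane) (h3 : (1 : ℝ) / 2 < ‖(z : ℂ) - 1 / 2‖) :
    z.re < z.re ^ 2 + z.im ^ 2 := by
  have h := mul_self_lt_mul_self (by norm_num) h3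
  rw [Complex.norm_mul_self_eq_normSq] at h
  simp only [Complex.normSq_apply, Complex.sub_re, Complex.sub_im] at h
  have hre : (z : ℂ).re = z.re := rfl
  have him : (z : ℂ).im = z.im := rfl
  rw [hre, him] at h
  norm_num at h
  nlinarith

/-- If `z` is in the region and the lower row of `g` is `(c, d)` with `c` even nonzero
and `d` odd, then `Im (g•z) < Im z`. -/
lemma im_lt (g : Matrix.SpecialLinearGroup (Fin 2) ℤ) (z : UpperHalfPlane)
    (hx1 : 0 < z.re) (hx2 : z.re < 1) (hS : z.re < z.re ^ 2 + z.im ^ 2)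
    (hc : Even (g.1 1 0)) (hc0 : g.1 1 0 ≠ 0) (hd : Odd (g.1 1 1)) :
    (g • z).im < z.im := by
  have hns : Complex.normSq (UpperHalfPlane.denom g z) =
      ((g.1 1 0 : ℝ) * z.re + g.1 1 1) ^ 2 + ((g.1 1 0 : ℝ) * z.im) ^ 2 := by
    rw [ModularGroup.denom_apply]
    simp [Complex.normSq_apply, Complex.add_re, Complex.add_im, Complex.mul_re, Complex.mul_im]
    ring
  have h1 : 1 < Complex.normSq (UpperHalfPlane.denom g z) := by
    rw [hns]
    exact key_ineq z.re z.im (g.1 1 0) (g.1 1 1) hx1 hx2 hS hc hc0 hd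
  rw [ModularGroup.im_smul_eq_div_normSq]
  calc z.im / Complex.normSq (UpperHalfPlane.denom g z) < z.im / 1 := by
        apply div_lt_div_of_pos_left z.im_pos (by norm_num) h1
    _ = z.im := by ring

/-- If `z` lies in the open ideal triangle with vertices `0`, `1`, `∞`
(`0 < Re z < 1`, `|z - 1/2| > 1/2`) and `g ∈ Γ₀(2)` is such that `g·z` also lies in
this open region, then `g = ±I`, and consequently `g·z = z`. -/
theorem stmt_3 (z : UpperHalfPlane)
    (h1 : 0 < z.re) (h2 : z.re < 1)
    (h3 : (1 : ℝ) / 2 < ‖(z : ℂ) - 1 / 2‖)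
    (g : Matrix.SpecialLinearGroup (Fin 2) ℤ) (hg : Even (g.1 1 0))
    (h1' : 0 < (g • z).re) (h2' : (g • z).re < 1)
    (h3' : (1 : ℝ) / 2 < ‖((g • z : UpperHalfPlane) : ℂ) - 1 / 2‖) :
    (g.1 = 1 ∨ g.1 = -1) ∧ g • z = z := by
  have hdet : g.1 0 0 * g.1 1 1 - g.1 0 1 * g.1 1 0 = 1 := by
    have := g.2; rwa [Matrix.det_fin_two] at this
  have hS := region_ineq z h3
  have hS' := region_ineq (g • z) h3'
  have had : Odd (g.1 0 0 * g.1 1 1) := by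
    have h : g.1 0 0 * g.1 1 1 = g.1 0 1 * g.1 1 0 + 1 := by linarith
    rw [h]
    exact Even.add_one (hg.mul_left _)
  have hdodd : Odd (g.1 1 1) := (Int.odd_mul.mp had).2
  have haodd : Odd (g.1 0 0) := (Int.odd_mul.mp had).1
  by_cases hc0 : g.1 1 0 = 0
  · -- c = 0 case
    rw [hc0, mul_zero, sub_zero] at hdet
    have heq : ((g • z : UpperHalfPlane) : ℂ) =
        ((g.1 0 0 : ℝ) * z + (g.1 0 1 : ℝ)) / ((g.1 1 0 : ℝ) * z + (g.1 1 1 : ℝ)) := by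
      rw [UpperHalfPlane.specialLinearGroup_apply]
      simp
    rw [hc0] at heq
    push_cast at heq
    rw [zero_mul, zero_add] at heq
    rcases Int.eq_one_or_neg_one_of_mul_eq_one' hdet with ⟨ha, hd⟩ | ⟨ha, hd⟩
    · rw [ha, hd] at heq
      push_cast at heq
      rw [one_mul, div_one] at heq
      have hre : (g • z).re = z.re + (g.1 0 1 : ℝ) := by
        have : (g • z).re = ((g • z : UpperHalfPlane) : ℂ).re := rfl
        rw [this, heq]
        simp [UpperHalfPlane.coe_re]
      rw [hre] at h1' h2'
      have hb : g.1 0 1 = 0 := by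
        have hb1 : (-1 : ℝ) < (g.1 0 1 : ℝ) := by linarith
        have hb2 : (g.1 0 1 : ℝ) < 1 := by linarith
        have hb1' : (-1 : ℤ) < g.1 0 1 := by exact_mod_cast hb1
        have hb2' : g.1 0 1 < 1 := by exact_mod_cast hb2
        omega
      constructor
      · left
        ext i j
        fin_cases i <;> fin_cases j <;>
          simp [ha, hb, hc0, hd, Matrix.one_apply]
      · ext
        rw [heq, hb]
        simp
    · rw [ha, hd] at heq
      push_cast at heq
      have heq2 : ((g • z : UpperHalfPlane) : ℂ) = (z : ℂ) - (g.1 0 1 : ℝ) := by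
        rw [heq]; push_cast; field_simp; ring
      have hre : (g • z).re = z.re - (g.1 0 1 : ℝ) := by
        have : (g • z).re = ((g • z : UpperHalfPlane) : ℂ).re := rfl
        rw [this, heq2]
        simp [UpperHalfPlane.coe_re]
      rw [hre] at h1' h2'
      have hb : g.1 0 1 = 0 := by
        have hb1 : (-1 : ℝ) < (g.1 0 1 : ℝ) := by linarith
        have hb2 : (g.1 0 1 : ℝ) < 1 := by linarith
        have hb1' : (-1 : ℤ) < g.1 0 1 := by exact_mod_cast hb1
        have hb2' : g.1 0 1 < 1 := by exact_mod_cast hb2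
        omega
      constructor
      · right
        ext i j
        fin_cases i <;> fin_cases j <;>
          simp [ha, hb, hc0, hd, Matrix.one_apply]
      · ext
        rw [heq2, hb]
        simp
  · exfalso
    have hlt1 : (g • z).im < z.im := im_lt g z h1 h2 hS hg hc0 hdodd
    have hginv := Matrix.SpecialLinearGroup.SL2_inv_expl g
    have hinv_c : g⁻¹.1 1 0 = -g.1 1 0 := by rw [hginv]; rfl
    have hinv_d : g⁻¹.1 1 1 = g.1 0 0 := by rw [hginv]; rfl
    have hlt2 : (g⁻¹ • (g • z)).im < (g • z).im := by
      apply im_lt g⁻¹ (g • z) h1' h2' hS'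
      · rw [hinv_c]; exact hg.neg
      · rw [hinv_c]; simpa using hc0
      · rw [hinv_d]; exact haodd
    rw [inv_smul_smul] at hlt2
    linarith
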